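/- The Δ-corrected two-grid iteration with Φ_c ≡ 0 converges locally quadratically to the exact coarse solution: assume each ψ_j : ℝ^d → ℝ^d is twice continuously differentiable, and let ū ∈ (ℝ^d)^{N_c+1} be the exact coarse solution, i.e. ū_0 = f_0 and ū_j = ψ_j(ū_{j−1}) + f_{jm} for 1 ≤ j ≤ N_c. Then there exist δ > 0 and C > 0 such that whenever the initial iterate w^0 satisfies ‖w^0 − ū‖ < δ, the iterates defined by w^{k+1}_0 = f_0 and w^{k+1}_j = ψ_j(w^k_{j−1}) + Dψ_j(w^k_{j−1})(w^{k+1}_{j−1} − w^k_{j−1}) + f_{jm} satisfy ‖w^{k+1} − ū‖ ≤ C‖w^k − ū‖² for all k ≥ 0 (in particular the iteration converges to ū for δ small enough). -/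

import Mathlib

/-- `sweep Φ f base k w` is `w^{(k)}`, where `w^{(0)} = w` and
`w^{(k)} = Φ(w^{(k-1)}) + f (base + k)` for `k ≥ 1`. -/
def sweep {d : ℕ} (Φ : (Fin d → ℝ) → Fin d → ℝ) (f : ℕ → Fin d → ℝ) (base : ℕ) :
    ℕ → (Fin d → ℝ) → (Fin d → ℝ)
  | 0, w => w
  | (k + 1), w => Φ (sweep Φ f base k w) + f (base + (k + 1))

/-- The ideal coarse propagator across the `j`-th coarse interval:
`ψ_j(w) = Φ(w^{(m-1)})` with `w^{(0)} = w`, `w^{(k)} = Φ(w^{(k-1)}) + f_{(j-1)m+k}`. -/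
def psi {d : ℕ} (Φ : (Fin d → ℝ) → Fin d → ℝ) (f : ℕ → Fin d → ℝ) (m j : ℕ)
    (w : Fin d → ℝ) : Fin d → ℝ :=
  Φ (sweep Φ f ((j - 1) * m) (m - 1) w)

lemma taylor_aux {d : ℕ} (g : (Fin d → ℝ) → (Fin d → ℝ)) (hg : ContDiff ℝ 2 g) (p : Fin d → ℝ) :
    ∃ K : ℝ, 0 ≤ K ∧
      (∀ x ∈ Metric.closedBall p 1, ‖fderiv ℝ g x‖ ≤ K) ∧
      (∀ x ∈ Metric.closedBall p 1, ∀ y ∈ Metric.closedBall p 1,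
        ‖g y - g x - fderiv ℝ g x (y - x)‖ ≤ K * (‖y - x‖ * ‖y - x‖)) := by
  have hdg : ContDiff ℝ 1 (fderiv ℝ g) := hg.fderiv_right (by norm_num)
  have hdg2 : Continuous (fderiv ℝ (fderiv ℝ g)) :=
    (hdg.fderiv_right (m := 0) (by norm_num)).continuous
  obtain ⟨L, hL⟩ := (isCompact_closedBall p 1).exists_bound_of_continuousOn
    hdg.continuous.continuousOn
  obtain ⟨M, hM⟩ := (isCompact_closedBall p 1).exists_bound_of_continuousOn
    (f := fderiv ℝ (fderiv ℝ g)) hdg2.continuousOn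
  refine ⟨|L| + |M|, by positivity, ?_, ?_⟩
  · intro x hx
    exact (hL x hx).trans ((le_abs_self L).trans (le_add_of_nonneg_right (abs_nonneg M)))
  · intro x hx y hy
    have hlip : ∀ z ∈ Metric.closedBall p 1, ‖fderiv ℝ g z - fderiv ℝ g x‖ ≤ |M| * ‖z - x‖ := by
      intro z hz
      exact (convex_closedBall p 1).norm_image_sub_le_of_norm_fderiv_le
        (fun a _ => (hdg.differentiable one_ne_zero).differentiableAt)
        (fun a ha => (hM a ha).trans (le_abs_self M)) hx hz
    have hseg : segment ℝ x y ⊆ Metric.closedBall p 1 :=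
      (convex_closedBall p 1).segment_subset hx hy
    have key := (convex_segment x y).norm_image_sub_le_of_norm_fderiv_le'
      (f := g) (φ := fderiv ℝ g x)
      (C := |M| * ‖y - x‖)
      (fun z _ => (hg.differentiable (by norm_num)).differentiableAt)
      (fun z hz => by
        refine (hlip z (hseg hz)).trans ?_
        have : ‖z - x‖ ≤ ‖y - x‖ := by
          obtain ⟨a, b, ha, hb, hab, rfl⟩ := hz
          have : a • x + b • y - x = b • (y - x) := by
            rw [smul_sub]; rw [show a = 1 - b by linarith]; module
          rw [this, norm_smul, Real.norm_eq_abs, abs_of_nonneg hb]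
          exact mul_le_of_le_one_left (norm_nonneg _) (by linarith)
        nlinarith [abs_nonneg M]) (left_mem_segment ℝ x y) (right_mem_segment ℝ x y)
    calc ‖g y - g x - (fderiv ℝ g x) (y - x)‖ ≤ |M| * ‖y - x‖ * ‖y - x‖ := key
    _ ≤ (|L| + |M|) * (‖y - x‖ * ‖y - x‖) := by nlinarith [abs_nonneg L, norm_nonneg (y - x)]

lemma step_bound {d : ℕ} (ψ : (Fin d → ℝ) → (Fin d → ℝ)) (x u v c : Fin d → ℝ)
    (K Km Bj ε : ℝ)
    (hK0 : 0 ≤ K) (hKKm : K ≤ Km) (hBj : 0 ≤ Bj)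
    (hT : ‖ψ u - ψ x - fderiv ℝ ψ x (u - x)‖ ≤ K * (‖u - x‖ * ‖u - x‖))
    (hL : ‖fderiv ℝ ψ x‖ ≤ K)
    (hux : ‖u - x‖ ≤ ε) (hvu : ‖v - u‖ ≤ Bj * ε ^ 2) :
    ‖(ψ x + fderiv ℝ ψ x (v - x) + c) - (ψ u + c)‖ ≤ (Km + Km * Bj) * ε ^ 2 := by
  have e1 : (ψ x + fderiv ℝ ψ x (v - x) + c) - (ψ u + c) =
      -(ψ u - ψ x - fderiv ℝ ψ x (u - x)) + fderiv ℝ ψ x (v - u) := by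
    simp only [map_sub]; abel
  rw [e1]
  refine (norm_add_le _ _).trans ?_
  rw [norm_neg]
  have h2 : ‖fderiv ℝ ψ x (v - u)‖ ≤ K * ‖v - u‖ :=
    le_trans ((fderiv ℝ ψ x).le_opNorm _) (mul_le_mul_of_nonneg_right hL (norm_nonneg _))
  have hε0 : (0:ℝ) ≤ ε := le_trans (norm_nonneg _) hux
  have t1 : K * (‖u - x‖ * ‖u - x‖) ≤ Km * (ε * ε) :=
    le_trans (mul_le_mul_of_nonneg_left (mul_self_le_mul_self (norm_nonneg _) hux) hK0)
      (mul_le_mul_of_nonneg_right hKKm (mul_self_nonneg ε))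
  have t2 : K * ‖v - u‖ ≤ Km * (Bj * ε ^ 2) :=
    le_trans (mul_le_mul_of_nonneg_left hvu hK0)
      (mul_le_mul_of_nonneg_right hKKm (mul_nonneg hBj (sq_nonneg ε)))
  have : Km * (ε * ε) + Km * (Bj * ε ^ 2) = (Km + Km * Bj) * ε ^ 2 := by ring
  linarith

set_option maxHeartbeats 1000000 in
/-- The Δ-corrected two-grid iteration with `Φ_c ≡ 0` converges locally quadratically to the
exact coarse solution `ū`: there are `δ > 0` and `C > 0` such that if `‖w⁰ - ū‖ < δ`, then
the iterates `w^{k+1}_0 = f_0`,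
`w^{k+1}_j = ψ_j(w^k_{j-1}) + Dψ_j(w^k_{j-1})(w^{k+1}_{j-1} - w^k_{j-1}) + f_{jm}`
satisfy `‖w^{k+1} - ū‖ ≤ C ‖w^k - ū‖²` for all `k`, and converge to `ū`. -/
theorem stmt7 {d n m Nc : ℕ} (hd : 1 ≤ d) (hn : 1 ≤ n) (hm : 1 ≤ m) (hdvd : m ∣ n)
    (hNc : Nc = n / m)
    (Φ : (Fin d → ℝ) → Fin d → ℝ) (f : ℕ → Fin d → ℝ)
    (hsmooth : ∀ j, 1 ≤ j → j ≤ Nc → ContDiff ℝ 2 (psi Φ f m j))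
    (ubar : Fin (Nc + 1) → Fin d → ℝ)
    (hubar0 : ubar ⟨0, Nat.succ_pos Nc⟩ = f 0)
    (hubar : ∀ (j : ℕ) (h1 : 1 ≤ j) (h2 : j ≤ Nc),
      ubar ⟨j, Nat.lt_succ_of_le h2⟩ = psi Φ f m j (ubar ⟨j - 1, by omega⟩) + f (j * m)) :
    ∃ δ > 0, ∃ C > 0, ∀ w : ℕ → Fin (Nc + 1) → Fin d → ℝ,
      ‖w 0 - ubar‖ < δ →
      (∀ k, w (k + 1) ⟨0, Nat.succ_pos Nc⟩ = f 0) →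
      (∀ (k : ℕ) (j : ℕ) (h1 : 1 ≤ j) (h2 : j ≤ Nc),
        w (k + 1) ⟨j, Nat.lt_succ_of_le h2⟩ =
          psi Φ f m j (w k ⟨j - 1, by omega⟩)
            + fderiv ℝ (psi Φ f m j) (w k ⟨j - 1, by omega⟩)
                (w (k + 1) ⟨j - 1, by omega⟩ - w k ⟨j - 1, by omega⟩)
            + f (j * m)) →
      (∀ k, ‖w (k + 1) - ubar‖ ≤ C * ‖w k - ubar‖ ^ 2) ∧
        Filter.Tendsto w Filter.atTop (nhds ubar) := by
  classical
  have hkey : ∀ j : ℕ, ∃ K : ℝ, 0 ≤ K ∧ ∀ (h1 : 1 ≤ j) (h2 : j ≤ Nc),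
      (∀ x ∈ Metric.closedBall (ubar ⟨j - 1, by omega⟩) 1,
        ‖fderiv ℝ (psi Φ f m j) x‖ ≤ K) ∧
      (∀ x ∈ Metric.closedBall (ubar ⟨j - 1, by omega⟩) 1,
        ∀ y ∈ Metric.closedBall (ubar ⟨j - 1, by omega⟩) 1,
        ‖psi Φ f m j y - psi Φ f m j x - fderiv ℝ (psi Φ f m j) x (y - x)‖ ≤
          K * (‖y - x‖ * ‖y - x‖)) := by
    intro j
    by_cases h : 1 ≤ j ∧ j ≤ Nc
    · obtain ⟨K, hK0, hKL, hKT⟩ := taylor_aux _ (hsmooth j h.1 h.2)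
        (ubar ⟨j - 1, by omega⟩)
      exact ⟨K, hK0, fun _ _ => ⟨hKL, hKT⟩⟩
    · exact ⟨0, le_refl 0, fun h1 h2 => absurd ⟨h1, h2⟩ h⟩
  choose K hK0 hKprop using hkey
  set Km : ℝ := ∑ i ∈ Finset.range (Nc + 1), K i with hKmdef
  have hKm0 : 0 ≤ Km := Finset.sum_nonneg fun i _ => hK0 i
  have hKle : ∀ j, j ≤ Nc → K j ≤ Km := fun j hj =>
    Finset.single_le_sum (fun i _ => hK0 i) (Finset.mem_range.mpr (by omega))
  set B : ℕ → ℝ := fun j => Nat.rec 0 (fun _ b => Km + Km * b) j with hBdef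
  have hBsucc : ∀ j, B (j + 1) = Km + Km * B j := fun j => rfl
  have hB0 : ∀ j, 0 ≤ B j := by
    intro j
    induction j with
    | zero => exact le_refl 0
    | succ j ih => rw [hBsucc]; positivity
  have hBmono : Monotone B := by
    apply monotone_nat_of_le_succ
    intro j
    induction j with
    | zero =>
      have h0 : B 0 = (0:ℝ) := rfl
      rw [hBsucc, h0]; nlinarith [hKm0]
    | succ j ih =>
      rw [hBsucc j] at ih
      rw [hBsucc (j + 1), hBsucc j]
      nlinarith [hKm0, ih]
  set C : ℝ := B Nc + 1 with hCdef
  have hC : 0 < C := by have := hB0 Nc; linarith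
  set δ : ℝ := min 1 (1 / (2 * C)) with hδdef
  have hδ : 0 < δ := lt_min one_pos (by positivity)
  have h2Cδ : C * δ ≤ 1 / 2 := by
    have h1 : δ ≤ 1 / (2 * C) := min_le_right _ _
    calc C * δ ≤ C * (1 / (2 * C)) := mul_le_mul_of_nonneg_left h1 hC.le
      _ = 1 / 2 := by field_simp
  refine ⟨δ, hδ, C, hC, ?_⟩
  intro w hw0 hw0step hstep
  have step : ∀ k, ‖w k - ubar‖ ≤ 1 →
      ‖w (k + 1) - ubar‖ ≤ C * ‖w k - ubar‖ ^ 2 := by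
    intro k hk1
    set ε : ℝ := ‖w k - ubar‖ with hεdef
    have hε0 : 0 ≤ ε := norm_nonneg _
    have claim : ∀ j, ∀ hj : j ≤ Nc,
        ‖w (k + 1) ⟨j, by omega⟩ - ubar ⟨j, by omega⟩‖ ≤ B j * ε ^ 2 := by
      intro j
      induction j with
      | zero =>
        intro _
        have hz : w (k + 1) ⟨0, by omega⟩ - ubar ⟨0, by omega⟩ = 0 := by
          rw [hw0step k, hubar0, sub_self]
        rw [hz, norm_zero]
        exact mul_nonneg (hB0 0) (sq_nonneg ε)
      | succ j ih =>
        intro hj1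
        have hjlt : j < Nc + 1 := by omega
        have ihj := ih (by omega)
        have hstepj := hstep k (j + 1) (by omega) hj1
        have hub := hubar (j + 1) (by omega) hj1
        simp only [Nat.add_sub_cancel] at hstepj hub
        rw [hstepj, hub]
        have hxu : ‖w k ⟨j, hjlt⟩ - ubar ⟨j, hjlt⟩‖ ≤ ε := by
          have := norm_le_pi_norm (w k - ubar) ⟨j, hjlt⟩
          simpa using this
        have hxball : w k ⟨j, hjlt⟩ ∈ Metric.closedBall (ubar ⟨j, hjlt⟩) 1 := by
          rw [Metric.mem_closedBall, dist_eq_norm]; exact hxu.trans hk1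
        have huball : ubar ⟨j, hjlt⟩ ∈ Metric.closedBall (ubar ⟨j, hjlt⟩) 1 :=
          Metric.mem_closedBall_self (by norm_num)
        obtain ⟨hKL, hKT⟩ := hKprop (j + 1) (by omega) hj1
        rw [hBsucc]
        refine step_bound (psi Φ f m (j + 1)) (w k ⟨j, hjlt⟩) (ubar ⟨j, hjlt⟩)
          (w (k + 1) ⟨j, hjlt⟩) (f ((j + 1) * m)) (K (j + 1)) Km (B j) ε
          (hK0 _) (hKle _ hj1) (hB0 j) ?_ (hKL _ hxball) ?_ ihj
        · exact hKT _ hxball _ huball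
        · rw [norm_sub_rev]; exact hxu
    rw [pi_norm_le_iff_of_nonneg (by positivity)]
    intro i
    have hi : i.1 ≤ Nc := by omega
    have hcl := claim i.1 hi
    rw [Pi.sub_apply]
    refine le_trans hcl ?_
    have hBi : B i.1 ≤ B Nc := hBmono hi
    nlinarith [sq_nonneg ε, hB0 Nc]
  have hcontr : ∀ k, ‖w k - ubar‖ < δ := by
    intro k
    induction k with
    | zero => exact hw0
    | succ k ih =>
      have h1 : ‖w k - ubar‖ ≤ 1 := le_of_lt (lt_of_lt_of_le ih (min_le_left _ _))
      have hs := step k h1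
      nlinarith [norm_nonneg (w k - ubar), hδ,
        mul_nonneg (mul_nonneg hC.le (sub_nonneg.mpr ih.le)) (norm_nonneg (w k - ubar)),
        mul_nonneg (by linarith : (0:ℝ) ≤ 1 / 2 - C * δ) (norm_nonneg (w k - ubar))]
  have hhalf : ∀ k, ‖w (k + 1) - ubar‖ ≤ (1 / 2) * ‖w k - ubar‖ := by
    intro k
    have ih := hcontr k
    have h1 : ‖w k - ubar‖ ≤ 1 := le_of_lt (lt_of_lt_of_le ih (min_le_left _ _))
    have hs := step k h1
    nlinarith [norm_nonneg (w k - ubar),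
      mul_nonneg (mul_nonneg hC.le (sub_nonneg.mpr ih.le)) (norm_nonneg (w k - ubar)),
      mul_nonneg (by linarith : (0:ℝ) ≤ 1 / 2 - C * δ) (norm_nonneg (w k - ubar))]
  refine ⟨fun k => step k (le_of_lt (lt_of_lt_of_le (hcontr k) (min_le_left _ _))), ?_⟩
  have hgeo : ∀ k, ‖w k - ubar‖ ≤ (1 / 2 : ℝ) ^ k * ‖w 0 - ubar‖ := by
    intro k
    induction k with
    | zero => simp
    | succ k ih =>
      calc ‖w (k + 1) - ubar‖ ≤ (1 / 2) * ‖w k - ubar‖ := hhalf k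
        _ ≤ (1 / 2) * ((1 / 2 : ℝ) ^ k * ‖w 0 - ubar‖) := by linarith
        _ = (1 / 2 : ℝ) ^ (k + 1) * ‖w 0 - ubar‖ := by ring
  rw [tendsto_iff_norm_sub_tendsto_zero]
  apply squeeze_zero (fun k => norm_nonneg _) hgeo
  have : Filter.Tendsto (fun k : ℕ => (1 / 2 : ℝ) ^ k) Filter.atTop (nhds 0) :=
    tendsto_pow_atTop_nhds_zero_of_lt_one (by norm_num) (by norm_num)
  simpa using this.mul_const ‖w 0 - ubar‖
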